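/- Nieto–Rodríguez-López theorem (strong form): let (X,d,≤) be a quasi-ordered complete metric space such that every pair {x,y} has a lower and an upper bound, the comparability relation ⟨⟩ is d-almost-selfclosed, T is ≤-monotone, and d(Tx,Ty) ≤ λ d(x,y) with λ ∈ (0,1) whenever x and y are comparable. Then T has a unique fixed point z, and T^n x → z for every x ∈ X. -/
import Mathlib


open Filter Topology

set_option maxHeartbeats 800000 in
/-- Nieto–Rodríguez-López theorem (strong form). -/
theorem stmt_18 {X : Type*} [MetricSpace X] [CompleteSpace X] [Nonempty X]
    (le : X → X → Prop)
    (hrefl : ∀ x, le x x) (htrans : ∀ x y z, le x y → le y z → le x z)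
    (hbounds : ∀ x y : X, (∃ l, le l x ∧ le l y) ∧ (∃ u, le x u ∧ le y u))
    (hasc : ∀ (z : ℕ → X) (l : X),
      (∀ n, le (z n) (z (n + 1)) ∨ le (z (n + 1)) (z n)) →
      Tendsto z atTop (𝓝 l) →
      ∃ φ : ℕ → ℕ, StrictMono φ ∧ ∀ n, le (z (φ n)) l ∨ le l (z (φ n)))
    (T : X → X)
    (hmono : (∀ x y, le x y → le (T x) (T y)) ∨
             (∀ x y, le x y → le (T y) (T x)))
    (lam : ℝ) (hlam0 : 0 < lam) (hlam1 : lam < 1)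
    (hcontr : ∀ x y : X, (le x y ∨ le y x) →
      dist (T x) (T y) ≤ lam * dist x y) :
    ∃ z : X, T z = z ∧ (∀ w, T w = w → w = z) ∧
      ∀ x, Tendsto (fun n => T^[n] x) atTop (𝓝 z) := by
  -- comparability is preserved by T
  have hcompT : ∀ x y : X, (le x y ∨ le y x) → (le (T x) (T y) ∨ le (T y) (T x)) := by
    intro x y h
    rcases hmono with hm | hm
    · exact h.imp (hm x y) (hm y x)
    · exact h.elim (fun h => Or.inr (hm x y h)) (fun h => Or.inl (hm y x h))
  -- iterated contraction on comparable pairs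
  have hiter : ∀ x y : X, (le x y ∨ le y x) → ∀ n,
      (le (T^[n] x) (T^[n] y) ∨ le (T^[n] y) (T^[n] x)) ∧
        dist (T^[n] x) (T^[n] y) ≤ lam ^ n * dist x y := by
    intro x y h n
    induction n with
    | zero => simpa using h
    | succ n ih =>
      rw [Function.iterate_succ_apply', Function.iterate_succ_apply']
      refine ⟨hcompT _ _ ih.1, ?_⟩
      calc dist (T (T^[n] x)) (T (T^[n] y)) ≤ lam * dist (T^[n] x) (T^[n] y) :=
            hcontr _ _ ih.1
        _ ≤ lam * (lam ^ n * dist x y) :=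
            mul_le_mul_of_nonneg_left ih.2 hlam0.le
        _ = lam ^ (n + 1) * dist x y := by ring
  have hpow : Tendsto (fun n : ℕ => lam ^ n) atTop (𝓝 0) :=
    tendsto_pow_atTop_nhds_zero_of_lt_one hlam0.le hlam1
  -- iterates of any two points come together
  have hd0 : ∀ x y : X, Tendsto (fun n => dist (T^[n] x) (T^[n] y)) atTop (𝓝 0) := by
    intro x y
    obtain ⟨-, u, hxu, hyu⟩ := hbounds x y
    apply squeeze_zero (fun n => dist_nonneg)
      (g := fun n => (dist x u + dist u y) * lam ^ n)
    · intro n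
      calc dist (T^[n] x) (T^[n] y)
          ≤ dist (T^[n] x) (T^[n] u) + dist (T^[n] u) (T^[n] y) := dist_triangle _ _ _
        _ ≤ lam ^ n * dist x u + lam ^ n * dist u y :=
            add_le_add (hiter x u (Or.inl hxu) n).2 (hiter u y (Or.inr hyu) n).2
        _ = (dist x u + dist u y) * lam ^ n := by ring
    · simpa using hpow.const_mul (dist x u + dist u y)
  -- build the approximating sequence
  set x₀ : X := Classical.arbitrary X with hx₀
  obtain ⟨-, u, h1, h2⟩ := hbounds x₀ (T x₀)
  have hcauchy : CauchySeq (fun n => T^[n] x₀) := by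
    apply cauchySeq_of_le_geometric lam (dist x₀ u + dist u (T x₀)) hlam1
    intro n
    calc dist (T^[n] x₀) (T^[n+1] x₀)
        = dist (T^[n] x₀) (T^[n] (T x₀)) := by rw [Function.iterate_succ_apply]
      _ ≤ dist (T^[n] x₀) (T^[n] u) + dist (T^[n] u) (T^[n] (T x₀)) := dist_triangle _ _ _
      _ ≤ lam ^ n * dist x₀ u + lam ^ n * dist u (T x₀) :=
          add_le_add (hiter x₀ u (Or.inl h1) n).2 (hiter u (T x₀) (Or.inr h2) n).2
      _ = (dist x₀ u + dist u (T x₀)) * lam ^ n := by ring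
  obtain ⟨z, hz⟩ := cauchySeq_tendsto_of_complete hcauchy
  -- interleaved comparability-ascending sequence
  set s : ℕ → X := fun n => if Even n then T^[n / 2] x₀ else T^[n / 2] u with hs
  have hsT : ∀ k, T (s k) = s (k + 2) := by
    intro k
    have hdiv : (k + 2) / 2 = k / 2 + 1 := Nat.add_div_right k (by norm_num)
    have hev : Even (k + 2) ↔ Even k := by
      constructor
      · intro h; rcases h with ⟨m, hm⟩; exact ⟨m - 1, by omega⟩
      · intro h; rcases h with ⟨m, hm⟩; exact ⟨m + 1, by omega⟩
    by_cases h : Even k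
    · simp only [hs, if_pos h, if_pos (hev.mpr h), hdiv, Function.iterate_succ_apply']
    · simp only [hs, if_neg h, if_neg (fun hh => h (hev.mp hh)), hdiv,
        Function.iterate_succ_apply']
  have hasc_s : ∀ n, le (s n) (s (n + 1)) ∨ le (s (n + 1)) (s n) := by
    intro n
    by_cases h : Even n
    · have h1' : ¬ Even (n + 1) := by simp [Nat.even_add_one, h]
      have hdiv : (n + 1) / 2 = n / 2 := by
        rcases h with ⟨m, hm⟩; omega
      simp only [hs, if_pos h, if_neg h1', hdiv]
      exact (hiter x₀ u (Or.inl h1) (n / 2)).1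
    · have h1' : Even (n + 1) := Nat.even_add_one.mpr h
      have hdiv : (n + 1) / 2 = n / 2 + 1 := by
        rcases h1' with ⟨m, hm⟩; omega
      simp only [hs, if_neg h, if_pos h1', hdiv, Function.iterate_succ_apply]
      exact (hiter u (T x₀) (Or.inr h2) (n / 2)).1
  have hdiv2 : Tendsto (fun n : ℕ => n / 2) atTop atTop :=
    tendsto_atTop_atTop.2 fun b => ⟨2 * b, fun a ha => by omega⟩
  have hszx : Tendsto (fun k : ℕ => dist (T^[k] x₀) z) atTop (𝓝 0) :=
    tendsto_iff_dist_tendsto_zero.mp hz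
  have hsz : Tendsto s atTop (𝓝 z) := by
    rw [tendsto_iff_dist_tendsto_zero]
    have hg : Tendsto (fun k : ℕ => lam ^ k * dist u x₀ + dist (T^[k] x₀) z)
        atTop (𝓝 0) := by
      simpa using (hpow.mul_const (dist u x₀)).add hszx
    apply squeeze_zero (fun n => dist_nonneg)
      (g := fun n => lam ^ (n / 2) * dist u x₀ + dist (T^[n / 2] x₀) z)
    · intro n
      calc dist (s n) z ≤ dist (s n) (T^[n / 2] x₀) + dist (T^[n / 2] x₀) z :=
            dist_triangle _ _ _
        _ ≤ lam ^ (n / 2) * dist u x₀ + dist (T^[n / 2] x₀) z := by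
            apply add_le_add _ le_rfl
            by_cases h : Even n
            · simp only [hs, if_pos h, dist_self]
              positivity
            · simp only [hs, if_neg h]
              exact (hiter u x₀ (Or.inr h1) (n / 2)).2
        _ = _ := rfl
    · exact hg.comp hdiv2
  obtain ⟨φ, hφ, hcompz⟩ := hasc s z hasc_s hsz
  -- z is a fixed point
  have hkey : ∀ n, dist (T z) z ≤ lam * dist (s (φ n)) z + dist (s (φ n + 2)) z := by
    intro n
    calc dist (T z) z ≤ dist (T z) (T (s (φ n))) + dist (T (s (φ n))) z :=
          dist_triangle _ _ _
      _ ≤ lam * dist (s (φ n)) z + dist (T (s (φ n))) z := by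
          refine add_le_add ?_ le_rfl
          have := hcontr z (s (φ n)) ((hcompz n).symm)
          rwa [dist_comm z (s (φ n))] at this
      _ = lam * dist (s (φ n)) z + dist (s (φ n + 2)) z := by rw [hsT]
  have hφt : Tendsto φ atTop atTop := hφ.tendsto_atTop
  have hA : Tendsto (fun n => dist (s (φ n)) z) atTop (𝓝 0) :=
    (tendsto_iff_dist_tendsto_zero.mp (hsz.comp hφt))
  have hB : Tendsto (fun n => dist (s (φ n + 2)) z) atTop (𝓝 0) :=
    (tendsto_iff_dist_tendsto_zero.mp
      (hsz.comp ((tendsto_atTop_atTop.2 fun b => ⟨b, fun a ha => by omega⟩ :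
        Tendsto (fun n : ℕ => n + 2) atTop atTop).comp hφt)))
  have hrhs : Tendsto (fun n => lam * dist (s (φ n)) z + dist (s (φ n + 2)) z)
      atTop (𝓝 0) := by
    simpa using (hA.const_mul lam).add hB
  have hdz : dist (T z) z ≤ 0 := ge_of_tendsto' hrhs hkey
  have hfix : T z = z := by
    have := le_antisymm hdz dist_nonneg
    exact dist_eq_zero.mp this
  refine ⟨z, hfix, ?_, ?_⟩
  · intro w hw
    have h := hd0 w z
    simp only [Function.iterate_fixed hw, Function.iterate_fixed hfix] at h
    exact dist_eq_zero.mp (tendsto_nhds_unique tendsto_const_nhds h)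
  · intro x
    rw [tendsto_iff_dist_tendsto_zero]
    have h := hd0 x z
    simpa [Function.iterate_fixed hfix] using h
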